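/- Let u be a Schwartz function on ℝ² with coordinates (x, y). With (∂⁻¹f)(x, y) = ∫_{−∞}^{x} f(s, y) ds, define the KP flows K₂(u) = u_y, K₃(u) = ¼u_xxx + 3u u_x + ¾∂⁻¹u_yy, the non-isospectral flow σ₃(u) = 2y·K₃(u) + x·K₂(u) + 2∂⁻¹u_y − u_x, and the Gâteaux derivative σ₃'(u)[w] = 2y(¼w_xxx + 3(uw)_x + ¾∂⁻¹w_yy) + x·w_y + 2∂⁻¹w_y − w_x. Then pointwise on ℝ²: ∂_x(σ₃(u)) − σ₃'(u)[u_x] = u_y. Equivalently, ⟦K₁, σ₃⟧ = K₂ where K₁(u) = u_x, the (l, r) = (1, 3) instance of the relation ⟦K_l, σ_r⟧ = l·K_{l+r−2} of the KP flow algebra. -/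

import Mathlib

/-- Partial derivative in the first coordinate `x`. -/
noncomputable def pdx (f : ℝ × ℝ → ℝ) : ℝ × ℝ → ℝ := fun p => fderiv ℝ f p (1, 0)

/-- Partial derivative in the second coordinate `y`. -/
noncomputable def pdy (f : ℝ × ℝ → ℝ) : ℝ × ℝ → ℝ := fun p => fderiv ℝ f p (0, 1)

/-- The antiderivative in `x` vanishing at `−∞`: `(∂⁻¹f)(x, y) = ∫_{−∞}^{x} f(s, y) ds`. -/
noncomputable def pinv (f : ℝ × ℝ → ℝ) : ℝ × ℝ → ℝ := fun p => ∫ s in Set.Iic p.1, f (s, p.2)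

/-- The KP flow `K₂(u) = u_y`. -/
noncomputable def K2 (u : ℝ × ℝ → ℝ) : ℝ × ℝ → ℝ := pdy u

/-- The KP flow `K₃(u) = ¼u_xxx + 3u u_x + ¾∂⁻¹u_yy`. -/
noncomputable def K3 (u : ℝ × ℝ → ℝ) : ℝ × ℝ → ℝ :=
  fun p => (1 / 4) * pdx (pdx (pdx u)) p + 3 * u p * pdx u p + (3 / 4) * pinv (pdy (pdy u)) p

/-- The non-isospectral KP flow `σ₃(u) = 2y·K₃(u) + x·K₂(u) + 2∂⁻¹u_y − u_x`. -/
noncomputable def sigma3 (u : ℝ × ℝ → ℝ) : ℝ × ℝ → ℝ :=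
  fun p => 2 * p.2 * K3 u p + p.1 * K2 u p + 2 * pinv (pdy u) p - pdx u p

/-- The Gâteaux derivative
`σ₃'(u)[w] = 2y(¼w_xxx + 3(uw)_x + ¾∂⁻¹w_yy) + x·w_y + 2∂⁻¹w_y − w_x`. -/
noncomputable def sigma3' (u w : ℝ × ℝ → ℝ) : ℝ × ℝ → ℝ :=
  fun p => 2 * p.2 * ((1 / 4) * pdx (pdx (pdx w)) p + 3 * pdx (fun q => u q * w q) p
      + (3 / 4) * pinv (pdy (pdy w)) p)
    + p.1 * pdy w p + 2 * pinv (pdy w) p - pdx w p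

open MeasureTheory Set SchwartzMap Metric Filter Topology

/-- `∂x` as an operation on Schwartz functions. -/
noncomputable def DX (f : SchwartzMap (ℝ × ℝ) ℝ) : SchwartzMap (ℝ × ℝ) ℝ :=
  LineDeriv.lineDerivOpCLM ℝ (SchwartzMap (ℝ × ℝ) ℝ) ((1 : ℝ), (0 : ℝ)) f

/-- `∂y` as an operation on Schwartz functions. -/
noncomputable def DY (f : SchwartzMap (ℝ × ℝ) ℝ) : SchwartzMap (ℝ × ℝ) ℝ :=
  LineDeriv.lineDerivOpCLM ℝ (SchwartzMap (ℝ × ℝ) ℝ) ((0 : ℝ), (1 : ℝ)) f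

lemma pdx_coe (f : SchwartzMap (ℝ × ℝ) ℝ) : pdx ⇑f = ⇑(DX f) :=
  funext fun p => (SchwartzMap.lineDerivOp_apply_eq_fderiv _ f p).symm

lemma pdy_coe (f : SchwartzMap (ℝ × ℝ) ℝ) : pdy ⇑f = ⇑(DY f) :=
  funext fun p => (SchwartzMap.lineDerivOp_apply_eq_fderiv _ f p).symm

lemma fderiv_coe_x (f : SchwartzMap (ℝ × ℝ) ℝ) (p : ℝ × ℝ) :
    fderiv ℝ ⇑f p ((1 : ℝ), (0 : ℝ)) = DX f p :=
  (SchwartzMap.lineDerivOp_apply_eq_fderiv _ f p).symm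

/-- Uniform decay of a Schwartz function in terms of the first coordinate only. -/
lemma decay1 {V : Type*} [NormedAddCommGroup V] [NormedSpace ℝ V]
    (g : SchwartzMap (ℝ × ℝ) V) :
    ∃ C : ℝ, 0 ≤ C ∧ ∀ q : ℝ × ℝ, ‖g q‖ ≤ C * (1 + q.1 ^ 2)⁻¹ := by
  obtain ⟨C2, hC2pos, hC2⟩ := g.decay 2 0
  obtain ⟨C0, hC0pos, hC0⟩ := g.decay 0 0
  refine ⟨C0 + C2, by linarith, fun q => ?_⟩
  have h2 := hC2 q
  have h0 := hC0 q
  simp only [pow_zero, one_mul, norm_iteratedFDeriv_zero] at h0 h2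
  have hq1 : |q.1| ≤ ‖q‖ := by
    simpa using norm_fst_le q
  have hpos : (0 : ℝ) < 1 + q.1 ^ 2 := by positivity
  rw [← div_eq_mul_inv, le_div_iff₀ hpos]
  have hsq : q.1 ^ 2 ≤ ‖q‖ ^ 2 := by
    have := pow_le_pow_left₀ (abs_nonneg q.1) hq1 2
    rwa [sq_abs] at this
  have key : q.1 ^ 2 * ‖g q‖ ≤ C2 :=
    le_trans (mul_le_mul_of_nonneg_right hsq (norm_nonneg _)) h2
  nlinarith [norm_nonneg (g q)]

lemma integrable_slice {V : Type*} [NormedAddCommGroup V] [NormedSpace ℝ V]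
    (f : SchwartzMap (ℝ × ℝ) V) (y : ℝ) :
    Integrable fun s : ℝ => f (s, y) := by
  obtain ⟨C, hC0, hC⟩ := decay1 f
  have hcont : Continuous fun s : ℝ => f (s, y) := f.continuous.comp (by fun_prop)
  refine (integrable_inv_one_add_sq.const_mul C).mono' hcont.aestronglyMeasurable ?_
  refine ae_of_all _ fun s => ?_
  simpa using hC (s, y)

lemma integrable_line {V : Type*} [NormedAddCommGroup V] [NormedSpace ℝ V]
    (g : SchwartzMap (ℝ × ℝ) V) (p : ℝ × ℝ) :
    Integrable fun t : ℝ => g (p - (t, 0)) := by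
  obtain ⟨C, hC0, hC⟩ := decay1 g
  have hcont : Continuous fun t : ℝ => g (p - (t, 0)) := g.continuous.comp (by fun_prop)
  have hint : Integrable fun t : ℝ => C * (1 + (p.1 - t) ^ 2)⁻¹ :=
    (integrable_inv_one_add_sq.comp_sub_left p.1).const_mul C
  refine hint.mono' hcont.aestronglyMeasurable (ae_of_all _ fun t => ?_)
  have h := hC (p - (t, 0))
  have h1 : (p - (t, 0)).1 = p.1 - t := rfl
  rw [h1] at h
  exact h

lemma tendsto_slice_atBot (f : SchwartzMap (ℝ × ℝ) ℝ) (y : ℝ) :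
    Tendsto (fun s : ℝ => f (s, y)) atBot (𝓝 0) := by
  obtain ⟨C, hC0, hC⟩ := decay1 f
  have h1 : Tendsto (fun s : ℝ => 1 + s ^ 2) atBot atTop := by
    refine tendsto_atTop_add_const_left _ 1 ?_
    have := (tendsto_pow_atTop (two_ne_zero)).comp (tendsto_abs_atBot_atTop (G := ℝ))
    refine this.congr fun s => ?_
    simp [sq_abs]
  have hb : Tendsto (fun s : ℝ => C * (1 + s ^ 2)⁻¹) atBot (𝓝 0) := by
    simpa using (h1.inv_tendsto_atTop).const_mul C
  exact squeeze_zero_norm (fun s => hC (s, y)) hb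

/-- Fundamental theorem of calculus: `∂⁻¹ ∘ ∂x = id` on Schwartz functions. -/
lemma pinv_DX (f : SchwartzMap (ℝ × ℝ) ℝ) (p : ℝ × ℝ) : pinv ⇑(DX f) p = f p := by
  have key : ∫ s in Iic p.1, (DX f) (s, p.2) = f (p.1, p.2) - 0 := by
    apply integral_Iic_of_hasDerivAt_of_tendsto (f := fun s : ℝ => f (s, p.2))
      (f' := fun s : ℝ => (DX f) (s, p.2)) (m := 0)
    · exact (f.continuous.comp (by fun_prop : Continuous fun s : ℝ => ((s, p.2) : ℝ × ℝ))).continuousWithinAt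
    · intro s _
      have h1 : HasFDerivAt ⇑f (fderiv ℝ ⇑f (s, p.2)) (s, p.2) :=
        (f.differentiable (s, p.2)).hasFDerivAt
      have h2 : HasDerivAt (fun s : ℝ => ((s, p.2) : ℝ × ℝ)) ((1 : ℝ), (0 : ℝ)) s :=
        (hasDerivAt_id s).prodMk (hasDerivAt_const s p.2)
      have h3 := h1.comp_hasDerivAt s h2
      have h4 : DX f (s, p.2) = fderiv ℝ ⇑f (s, p.2) ((1 : ℝ), (0 : ℝ)) :=
        SchwartzMap.lineDerivOp_apply_eq_fderiv _ f _
      rw [h4]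
      exact h3
    · exact (integrable_slice (DX f) p.2).integrableOn
    · exact tendsto_slice_atBot f p.2
  simpa [pinv] using key

/-- Change of variables: `(∂⁻¹f)(q) = ∫_{t>0} f(q - (t,0)) dt`. -/
lemma pinv_eq (f : ℝ × ℝ → ℝ) (q : ℝ × ℝ) :
    pinv f q = ∫ t in Ioi (0 : ℝ), f (q - (t, 0)) := by
  have h1 : ∀ t : ℝ, q - (t, 0) = (q.1 - t, q.2) := fun t => by
    ext <;> simp
  have h2 : (∫ t in Ioi (0 : ℝ), f (q - (t, 0)))
      = ∫ t in Ioi (0 : ℝ), (fun r : ℝ => f (q.1 + r, q.2)) (-t) := by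
    refine setIntegral_congr_fun measurableSet_Ioi fun t _ => ?_
    simp [h1, sub_eq_add_neg]
  rw [h2, integral_comp_neg_Ioi 0 (fun r : ℝ => f (q.1 + r, q.2)), neg_zero]
  have h3 := (measurePreserving_add_left volume q.1).setIntegral_preimage_emb
    (measurableEmbedding_addLeft q.1) (fun s => f (s, q.2)) (Iic q.1)
  have h4 : (fun x : ℝ => q.1 + x) ⁻¹' Iic q.1 = Iic (0 : ℝ) := by
    ext x; simp
  rw [h4] at h3
  rw [pinv, ← h3]

/-- Differentiability of the antiderivative of a Schwartz function. -/
lemma pinv_hasFDerivAt (f : SchwartzMap (ℝ × ℝ) ℝ) (p : ℝ × ℝ) :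
    HasFDerivAt (pinv ⇑f)
      (∫ t in Ioi (0 : ℝ), fderiv ℝ ⇑f (p - (t, 0))) p := by
  have hfd : fderiv ℝ ⇑f = ⇑(SchwartzMap.fderivCLM ℝ (ℝ × ℝ) ℝ f) :=
    funext fun x => (SchwartzMap.fderivCLM_apply ℝ f x).symm
  obtain ⟨C, hC0, hC⟩ := decay1 (SchwartzMap.fderivCLM ℝ (ℝ × ℝ) ℝ f)
  have heq : pinv ⇑f = fun x : ℝ × ℝ => ∫ t in Ioi (0 : ℝ), f (x - (t, 0)) :=
    funext fun q => pinv_eq ⇑f q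
  rw [heq]
  have hbase : Integrable fun t : ℝ => (1 + (p.1 - t) ^ 2)⁻¹ :=
    integrable_inv_one_add_sq.comp_sub_left p.1
  apply hasFDerivAt_integral_of_dominated_of_fderiv_le
    (F' := fun x t => fderiv ℝ ⇑f (x - (t, 0)))
    (bound := fun t => 8 * C * (4 + (p.1 - t) ^ 2)⁻¹) (s := ball p 1) (ball_mem_nhds p one_pos)
  · filter_upwards with x
    exact ((f.continuous.comp (by fun_prop : Continuous fun t : ℝ => x - (t, 0)))).aestronglyMeasurable
  · exact (integrable_line f p).integrableOn
  · rw [hfd]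
    exact (((SchwartzMap.fderivCLM ℝ (ℝ × ℝ) ℝ f).continuous).comp
      (by fun_prop : Continuous fun t : ℝ => p - (t, 0))).aestronglyMeasurable
  · refine ae_of_all _ fun t x hx => ?_
    have hb := hC (x - (t, 0))
    have h1 : (x - (t, 0)).1 = x.1 - t := rfl
    rw [h1] at hb
    rw [hfd]
    refine hb.trans ?_
    have habs : |x.1 - p.1| ≤ 1 := by
      have h2 : dist x.1 p.1 ≤ dist x p := by
        rw [Prod.dist_eq]; exact le_max_left _ _
      have h3 : dist x p ≤ 1 := le_of_lt (mem_ball.mp hx)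
      calc |x.1 - p.1| = dist x.1 p.1 := (Real.dist_eq _ _).symm
        _ ≤ 1 := h2.trans h3
    have h5 : (p.1 - t) ^ 2 ≤ 2 * (x.1 - t) ^ 2 + 2 := by
      nlinarith [sq_nonneg ((p.1 - t) - 2 * (x.1 - t)), abs_le.mp habs]
    have hp1 : (0 : ℝ) < 1 + (x.1 - t) ^ 2 := by positivity
    have hp2 : (0 : ℝ) < 4 + (p.1 - t) ^ 2 := by positivity
    rw [← div_eq_mul_inv, ← div_eq_mul_inv, div_le_div_iff₀ hp1 hp2]
    nlinarith [sq_nonneg (x.1 - t)]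
  · have hcont : Continuous fun t : ℝ => 8 * C * (4 + (p.1 - t) ^ 2)⁻¹ := by
      have hne : ∀ t : ℝ, (4 + (p.1 - t) ^ 2) ≠ 0 := fun t => by positivity
      exact continuous_const.mul (((continuous_const.add
        ((continuous_const.sub continuous_id).pow 2)).inv₀ hne))
    refine ((hbase.const_mul (8 * C)).mono' hcont.aestronglyMeasurable
      (ae_of_all _ fun t => ?_)).integrableOn
    have hp1 : (0 : ℝ) < 1 + (p.1 - t) ^ 2 := by positivity
    have hp2 : (0 : ℝ) < 4 + (p.1 - t) ^ 2 := by positivity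
    rw [Real.norm_eq_abs, abs_of_nonneg (by positivity)]
    have h6 : (4 + (p.1 - t) ^ 2)⁻¹ ≤ (1 + (p.1 - t) ^ 2)⁻¹ :=
      inv_anti₀ hp1 (by linarith)
    exact mul_le_mul_of_nonneg_left h6 (by positivity)
  · refine ae_of_all _ fun t x hx => ?_
    have h1 : HasFDerivAt (fun x : ℝ × ℝ => x - (t, 0))
        (ContinuousLinearMap.id ℝ (ℝ × ℝ)) x := (hasFDerivAt_id x).sub_const (t, 0)
    have h2 := ((f.differentiable (x - (t, 0))).hasFDerivAt).comp x h1
    exact h2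

/-- The `x`-derivative of `∂⁻¹f` is `f`. -/
lemma pinv_fderiv_fst (f : SchwartzMap (ℝ × ℝ) ℝ) (p : ℝ × ℝ) :
    (∫ t in Ioi (0 : ℝ), fderiv ℝ ⇑f (p - (t, 0))) ((1 : ℝ), (0 : ℝ)) = f p := by
  have hfd : fderiv ℝ ⇑f = ⇑(SchwartzMap.fderivCLM ℝ (ℝ × ℝ) ℝ f) :=
    funext fun x => (SchwartzMap.fderivCLM_apply ℝ f x).symm
  have hint : Integrable (fun t : ℝ => fderiv ℝ ⇑f (p - (t, 0)))
      (volume.restrict (Ioi 0)) := by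
    rw [hfd]
    exact (integrable_line (SchwartzMap.fderivCLM ℝ (ℝ × ℝ) ℝ f) p).integrableOn
  rw [ContinuousLinearMap.integral_apply hint]
  have h1 : ∀ t : ℝ, fderiv ℝ ⇑f (p - (t, 0)) ((1 : ℝ), (0 : ℝ)) = (DX f) (p - (t, 0)) :=
    fun t => (SchwartzMap.lineDerivOp_apply_eq_fderiv _ f _).symm
  calc (∫ t in Ioi (0 : ℝ), fderiv ℝ ⇑f (p - (t, 0)) ((1 : ℝ), (0 : ℝ)))
      = ∫ t in Ioi (0 : ℝ), (DX f) (p - (t, 0)) :=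
        setIntegral_congr_fun measurableSet_Ioi fun t _ => h1 t
    _ = pinv ⇑(DX f) p := (pinv_eq ⇑(DX f) p).symm
    _ = f p := pinv_DX f p

lemma pdx_pdy (f : SchwartzMap (ℝ × ℝ) ℝ) (p : ℝ × ℝ) :
    pdx (pdy ⇑f) p = pdy (pdx ⇑f) p := by
  show fderiv ℝ (fun q : ℝ × ℝ => fderiv ℝ ⇑f q ((0 : ℝ), (1 : ℝ))) p ((1 : ℝ), (0 : ℝ))
    = fderiv ℝ (fun q : ℝ × ℝ => fderiv ℝ ⇑f q ((1 : ℝ), (0 : ℝ))) p ((0 : ℝ), (1 : ℝ))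
  have hdf : ∀ y, HasFDerivAt ⇑f (fderiv ℝ ⇑f y) y := fun y => (f.differentiable y).hasFDerivAt
  have hcd := (contDiff_infty_iff_fderiv.mp (f.smooth ⊤)).2
  have hdd : HasFDerivAt (fderiv ℝ ⇑f) (fderiv ℝ (fderiv ℝ ⇑f) p) p :=
    (hcd.differentiable (by simp) p).hasFDerivAt
  have hsym := second_derivative_symmetric hdf hdd ((1 : ℝ), (0 : ℝ)) ((0 : ℝ), (1 : ℝ))
  have key : ∀ v w : ℝ × ℝ,
      fderiv ℝ (fun q => fderiv ℝ ⇑f q v) p w = fderiv ℝ (fderiv ℝ ⇑f) p w v := by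
    intro v w
    have h := fderiv_clm_apply (x := p) (c := fderiv ℝ ⇑f) (u := fun _ => v)
      (hcd.differentiable (by simp) p) (differentiableAt_const v)
    rw [h]
    simp
  rw [key, key, hsym]

/-- Clairaut's theorem for Schwartz functions: `∂x∂y = ∂y∂x`. -/
lemma DX_DY (f : SchwartzMap (ℝ × ℝ) ℝ) : DX (DY f) = DY (DX f) := by
  ext p
  have h1 : ⇑(DX (DY f)) = pdx (pdy ⇑f) := by rw [pdy_coe, pdx_coe]
  have h2 : ⇑(DY (DX f)) = pdy (pdx ⇑f) := by rw [pdx_coe, pdy_coe]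
  rw [h1, h2, pdx_pdy]

/-- The `(l, r) = (1, 3)` instance `⟦K₁, σ₃⟧ = K₂` of the KP flow algebra relation
`⟦K_l, σ_r⟧ = l·K_{l+r−2}`: for a Schwartz function `u`,
`∂_x(σ₃(u)) − σ₃'(u)[u_x] = u_y` pointwise on `ℝ²`. -/
theorem kp_K1_sigma3_bracket (u : SchwartzMap (ℝ × ℝ) ℝ) :
    ∀ p : ℝ × ℝ, pdx (sigma3 ⇑u) p - sigma3' ⇑u (pdx ⇑u) p = pdy ⇑u p := by
  intro p
  have hS : ∀ g : SchwartzMap (ℝ × ℝ) ℝ, HasFDerivAt ⇑g (fderiv ℝ ⇑g p) p :=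
    fun g => (g.differentiable p).hasFDerivAt
  have hP1 := pinv_hasFDerivAt (DY u) p
  have hP2 := pinv_hasFDerivAt (DY (DY u)) p
  have hsig : sigma3 ⇑u = fun q : ℝ × ℝ =>
      2 * q.2 * ((1 / 4) * (DX (DX (DX u))) q + 3 * u q * (DX u) q
        + (3 / 4) * pinv ⇑(DY (DY u)) q)
      + q.1 * (DY u) q + 2 * pinv ⇑(DY u) q - (DX u) q := by
    funext q
    simp only [sigma3, K3, K2, pdx_coe, pdy_coe]
  have H := (((((hasFDerivAt_snd (𝕜 := ℝ) (p := p)).const_mul (2 : ℝ)).mul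
      ((((hS (DX (DX (DX u)))).const_mul ((1 : ℝ) / 4)).add
        (((hS u).const_mul (3 : ℝ)).mul (hS (DX u)))).add
       (hP2.const_mul ((3 : ℝ) / 4)))).add
      ((hasFDerivAt_fst (𝕜 := ℝ) (p := p)).mul (hS (DY u)))).add
      (hP1.const_mul (2 : ℝ))).sub (hS (DX u))
  replace H := H.congr_of_eventuallyEq (f₁ := sigma3 ⇑u)
    (Filter.Eventually.of_forall fun q => by rw [hsig]; rfl)
  have e1 : pdx (sigma3 ⇑u) p = fderiv ℝ (sigma3 ⇑u) p ((1 : ℝ), (0 : ℝ)) := rfl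
  rw [e1, H.fderiv]
  have hmul : pdx (fun q : ℝ × ℝ => ⇑u q * ⇑(DX u) q) p
      = ⇑u p * ⇑(DX (DX u)) p + ⇑(DX u) p * ⇑(DX u) p := by
    have h : fderiv ℝ (fun q : ℝ × ℝ => ⇑u q * ⇑(DX u) q) p = _ := ((hS u).mul (hS (DX u))).fderiv
    have e2 : pdx (fun q : ℝ × ℝ => ⇑u q * ⇑(DX u) q) p
        = fderiv ℝ (fun q : ℝ × ℝ => ⇑u q * ⇑(DX u) q) p ((1 : ℝ), (0 : ℝ)) := rfl
    rw [e2, h]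
    simp only [ContinuousLinearMap.add_apply, ContinuousLinearMap.smul_apply,
      smul_eq_mul, fderiv_coe_x]
  simp only [sigma3', pdx_coe, pdy_coe, hmul]
  simp only [ContinuousLinearMap.add_apply, ContinuousLinearMap.sub_apply,
    ContinuousLinearMap.smul_apply, smul_eq_mul, ContinuousLinearMap.coe_snd',
    ContinuousLinearMap.coe_fst', pinv_fderiv_fst, fderiv_coe_x]
  simp only [← DX_DY, pinv_DX]
  ring
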